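/- Let A be a nonempty proper subset of a set D, let a ∈ A, and define the operation ⊣ on D by: x ⊣ y = x if x ∈ A, and x ⊣ y = a if x ∉ A. Then ⊣ is associative and right commutative, and a bijection f : D → D is an automorphism of (D,⊣) if and only if f(A) = A and f(a) = a; hence the automorphism group of the semigroup LO_{A←D} = (D,⊣) is isomorphic to S_{A∖{a}} × S_{D∖A}. -/

import Mathlib

/-- A dimonoid: two associative operations `ld` (⊣) and `rd` (⊢) satisfying
axioms (D1), (D2), (D3). -/
def IsDimonoid {D : Type*} (ld rd : D → D → D) : Prop :=
  (∀ x y z, ld (ld x y) z = ld x (ld y z)) ∧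
  (∀ x y z, rd (rd x y) z = rd x (rd y z)) ∧
  (∀ x y z, ld (ld x y) z = ld x (rd y z)) ∧
  (∀ x y z, ld (rd x y) z = rd x (ld y z)) ∧
  (∀ x y z, rd (ld x y) z = rd x (rd y z))

/-- The automorphism group of a magma `(D, op)`, as a subgroup of `Equiv.Perm D`. -/
def semigroupAutGroup {D : Type*} (op : D → D → D) : Subgroup (Equiv.Perm D) where
  carrier := {f : Equiv.Perm D | ∀ x y, f (op x y) = op (f x) (f y)}
  one_mem' := fun _ _ => rfl
  mul_mem' := by
    intro f g hf hg
    simp only [Set.mem_setOf_eq] at hf hg ⊢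
    intro x y
    simp [Equiv.Perm.mul_apply, hg, hf]
  inv_mem' := by
    intro f hf
    simp only [Set.mem_setOf_eq] at hf ⊢
    intro x y
    apply f.injective
    rw [hf]
    simp

/-- The automorphism group of a dimonoid `(D, ld, rd)`. -/
def dimonoidAutGroup {D : Type*} (ld rd : D → D → D) : Subgroup (Equiv.Perm D) :=
  semigroupAutGroup ld ⊓ semigroupAutGroup rd

/-- A bijection mapping `A` into `A` and `Aᶜ` into `Aᶜ` maps `A` onto `A`. -/
lemma perm_image_eq_of_mapsTo {D : Type*} {A : Set D} (f : Equiv.Perm D)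
    (h1 : ∀ x ∈ A, f x ∈ A) (h2 : ∀ x, x ∉ A → f x ∉ A) : ⇑f '' A = A := by
  ext y
  constructor
  · rintro ⟨x, hx, rfl⟩; exact h1 x hx
  · intro hy
    refine ⟨f⁻¹ y, ?_, f.apply_symm_apply y⟩
    by_contra hxy
    have := h2 _ hxy
    rw [show f (f⁻¹ y) = y from f.apply_symm_apply y] at this
    exact this hy

/-- For a nonempty proper subset `A ⊆ D` and `a ∈ A`, the semigroup
`LO_{A←D}` with `x ⊣ y = x` for `x ∈ A` and `x ⊣ y = a` for `x ∉ A`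
is associative and right commutative; its automorphisms are exactly the
bijections `f` with `f(A) = A` and `f(a) = a`, and its automorphism group is
isomorphic to `S_{A∖{a}} × S_{D∖A}`. -/
theorem LO_A_D_semigroup {D : Type*} (A : Set D) (hA : A.Nonempty) (hAp : A ≠ Set.univ)
    (a : D) (ha : a ∈ A) (ld : D → D → D)
    (hld1 : ∀ x y, x ∈ A → ld x y = x)
    (hld2 : ∀ x y, x ∉ A → ld x y = a) :
    (∀ x y z, ld (ld x y) z = ld x (ld y z)) ∧
    (∀ s x y, ld (ld s x) y = ld (ld s y) x) ∧
    (∀ f : Equiv.Perm D,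
      (∀ x y, f (ld x y) = ld (f x) (f y)) ↔ (⇑f '' A = A ∧ f a = a)) ∧
    Nonempty (↥(semigroupAutGroup ld) ≃* Equiv.Perm ↥(A \ {a}) × Equiv.Perm ↥Aᶜ) := by
  classical
  have hmemA : ∀ x y, ld x y ∈ A := by
    intro x y
    by_cases hx : x ∈ A
    · rw [hld1 x y hx]; exact hx
    · rw [hld2 x y hx]; exact ha
  obtain ⟨b, hb⟩ : ∃ b, b ∉ A := by
    by_contra h
    push_neg at h
    exact hAp (Set.eq_univ_of_forall h)
  have hchar : ∀ f : Equiv.Perm D,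
      (∀ x y, f (ld x y) = ld (f x) (f y)) ↔ (⇑f '' A = A ∧ f a = a) := by
    intro f
    constructor
    · intro hf
      have h1 : ∀ x ∈ A, f x ∈ A := by
        intro x hx
        by_contra hfx
        have := hf x x
        rw [hld1 x x hx, hld2 _ _ hfx] at this
        exact hfx (this ▸ ha)
      have h2 : ∀ x, x ∉ A → f x ∉ A := by
        intro x hx hfx
        have := hf x x
        rw [hld2 x x hx, hld1 _ _ hfx] at this
        have : x = a := f.injective this.symm
        exact hx (this ▸ ha)
      have hfa : f a = a := by
        have := hf b b
        rw [hld2 b b hb, hld2 _ _ (h2 b hb)] at this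
        exact this
      exact ⟨perm_image_eq_of_mapsTo f h1 h2, hfa⟩
    · rintro ⟨hfA, hfa⟩ x y
      have h1 : ∀ x ∈ A, f x ∈ A := by
        intro x hx; rw [← hfA]; exact ⟨x, hx, rfl⟩
      have h2 : ∀ x, x ∉ A → f x ∉ A := by
        intro x hx hfx
        rw [← hfA] at hfx
        obtain ⟨z, hz, hzx⟩ := hfx
        exact hx ((f.injective hzx) ▸ hz)
      by_cases hx : x ∈ A
      · rw [hld1 x y hx, hld1 _ _ (h1 x hx)]
      · rw [hld2 x y hx, hld2 _ _ (h2 x hx), hfa]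
  refine ⟨?_, ?_, hchar, ?_⟩
  · intro x y z
    rw [hld1 _ _ (hmemA x y)]
    by_cases hx : x ∈ A
    · rw [hld1 _ _ hx, hld1 _ _ hx]
    · rw [hld2 _ _ hx, hld2 _ _ hx]
  · intro s x y
    rw [hld1 _ _ (hmemA s x), hld1 _ _ (hmemA s y)]
    by_cases hs : s ∈ A
    · rw [hld1 _ _ hs, hld1 _ _ hs]
    · rw [hld2 _ _ hs, hld2 _ _ hs]
  · have hanc : a ∉ (Aᶜ : Set D) := by simp [ha]
    have hand : a ∉ A \ {a} := by simp
    let Φ0 : Equiv.Perm ↥(A \ {a}) × Equiv.Perm ↥Aᶜ → Equiv.Perm D :=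
      fun gh => Equiv.Perm.ofSubtype gh.1 * Equiv.Perm.ofSubtype gh.2
    have hd : ∀ (g : Equiv.Perm ↥(A \ {a})) (h : Equiv.Perm ↥Aᶜ),
        Commute (Equiv.Perm.ofSubtype g) (Equiv.Perm.ofSubtype (p := (· ∈ Aᶜ)) h) := by
      intro g h
      apply Equiv.Perm.Disjoint.commute
      intro x
      by_cases hx : x ∈ A \ {a}
      · right
        exact Equiv.Perm.ofSubtype_apply_of_not_mem (p := (· ∈ Aᶜ)) h (by simp [hx.1])
      · left
        exact Equiv.Perm.ofSubtype_apply_of_not_mem (p := (· ∈ A \ {a})) g hx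
    let Φ : Equiv.Perm ↥(A \ {a}) × Equiv.Perm ↥Aᶜ →* Equiv.Perm D :=
      { toFun := Φ0
        map_one' := by simp [Φ0]
        map_mul' := by
          intro x y
          simp only [Φ0, Prod.fst_mul, Prod.snd_mul, map_mul]
          rw [mul_assoc, mul_assoc, ← mul_assoc (Equiv.Perm.ofSubtype x.2),
            (hd y.1 x.2).symm.eq, mul_assoc] }
    have hΦapp : ∀ (g : Equiv.Perm ↥(A \ {a})) (h : Equiv.Perm ↥Aᶜ) (x : D),
        Φ (g, h) x = Equiv.Perm.ofSubtype g (Equiv.Perm.ofSubtype h x) := fun _ _ _ => rfl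
    have hΦmem : ∀ gh, Φ gh ∈ semigroupAutGroup ld := by
      rintro ⟨g, h⟩
      have key : ∀ x y, (Φ (g, h)) (ld x y) = ld ((Φ (g, h)) x) ((Φ (g, h)) y) := by
        apply (hchar _).mpr
        have happ : ∀ x, x ∈ A → (Φ (g, h)) x ∈ A := by
          intro x hx
          rw [hΦapp,
            Equiv.Perm.ofSubtype_apply_of_not_mem (p := (· ∈ Aᶜ)) h (by simp [hx])]
          by_cases hx' : x ∈ A \ {a}
          · rw [Equiv.Perm.ofSubtype_apply_of_mem (p := (· ∈ A \ {a})) g hx']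
            exact (g ⟨x, hx'⟩).2.1
          · rw [Equiv.Perm.ofSubtype_apply_of_not_mem (p := (· ∈ A \ {a})) g hx']
            exact hx
        have happ2 : ∀ x, x ∉ A → (Φ (g, h)) x ∉ A := by
          intro x hx
          rw [hΦapp, Equiv.Perm.ofSubtype_apply_of_mem (p := (· ∈ Aᶜ)) h hx]
          have hh : ((h ⟨x, hx⟩ : ↥Aᶜ) : D) ∉ A := (h ⟨x, hx⟩).2
          rw [Equiv.Perm.ofSubtype_apply_of_not_mem (p := (· ∈ A \ {a})) g
            (fun hc => hh hc.1)]
          exact hh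
        refine ⟨perm_image_eq_of_mapsTo _ happ happ2, ?_⟩
        rw [hΦapp, Equiv.Perm.ofSubtype_apply_of_not_mem (p := (· ∈ Aᶜ)) h hanc,
          Equiv.Perm.ofSubtype_apply_of_not_mem (p := (· ∈ A \ {a})) g hand]
      exact key
    let Φ' : Equiv.Perm ↥(A \ {a}) × Equiv.Perm ↥Aᶜ →* ↥(semigroupAutGroup ld) :=
      Φ.codRestrict _ hΦmem
    have hinj : Function.Injective Φ' := by
      intro gh gh' heq
      obtain ⟨g, h⟩ := gh
      obtain ⟨g', h'⟩ := gh'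
      have hgh' : Φ (g, h) = Φ (g', h') := congrArg Subtype.val heq
      have key : ∀ x : D,
          Equiv.Perm.ofSubtype g (Equiv.Perm.ofSubtype h x)
            = Equiv.Perm.ofSubtype g' (Equiv.Perm.ofSubtype h' x) := by
        intro x
        have : (Φ (g, h)) x = (Φ (g', h')) x := by rw [hgh']
        rw [hΦapp, hΦapp] at this
        exact this
      have hg : g = g' := by
        ext x
        have hx := key (x : D)
        rw [Equiv.Perm.ofSubtype_apply_of_not_mem (p := (· ∈ Aᶜ)) h (by simp [x.2.1]),
          Equiv.Perm.ofSubtype_apply_of_not_mem (p := (· ∈ Aᶜ)) h' (by simp [x.2.1]),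
          Equiv.Perm.ofSubtype_apply_of_mem (p := (· ∈ A \ {a})) g x.2,
          Equiv.Perm.ofSubtype_apply_of_mem (p := (· ∈ A \ {a})) g' x.2] at hx
        exact congrArg Subtype.val (Subtype.ext hx)
      have hh : h = h' := by
        ext x
        have hx := key (x : D)
        rw [Equiv.Perm.ofSubtype_apply_of_mem (p := (· ∈ Aᶜ)) h x.2,
          Equiv.Perm.ofSubtype_apply_of_mem (p := (· ∈ Aᶜ)) h' x.2,
          Equiv.Perm.ofSubtype_apply_of_not_mem (p := (· ∈ A \ {a})) g
            (fun hc => (h x).2 hc.1),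
          Equiv.Perm.ofSubtype_apply_of_not_mem (p := (· ∈ A \ {a})) g'
            (fun hc => (h' x).2 hc.1)] at hx
        exact congrArg Subtype.val (Subtype.ext hx)
      rw [hg, hh]
    have hsurj : Function.Surjective Φ' := by
      rintro ⟨f, hf⟩
      obtain ⟨hfA, hfa⟩ := (hchar f).mp hf
      have h1 : ∀ x ∈ A, f x ∈ A := by
        intro x hx; rw [← hfA]; exact ⟨x, hx, rfl⟩
      have h2 : ∀ x, x ∉ A → f x ∉ A := by
        intro x hx hfx
        rw [← hfA] at hfx
        obtain ⟨z, hz, hzx⟩ := hfx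
        exact hx ((f.injective hzx) ▸ hz)
      have hp1 : ∀ x, x ∈ A \ {a} ↔ f x ∈ A \ {a} := by
        intro x
        constructor
        · rintro ⟨hx, hxa⟩
          refine ⟨h1 x hx, fun hc => hxa ?_⟩
          simp only [Set.mem_singleton_iff] at hc ⊢
          exact f.injective (by rw [hc, hfa])
        · rintro ⟨hx, hxa⟩
          by_cases hxA : x ∈ A
          · refine ⟨hxA, fun hc => hxa ?_⟩
            simp only [Set.mem_singleton_iff] at hc ⊢
            rw [hc, hfa]
          · exact absurd hx (h2 x hxA)
      have hp2 : ∀ x, x ∈ (Aᶜ : Set D) ↔ f x ∈ (Aᶜ : Set D) := by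
        intro x
        simp only [Set.mem_compl_iff]
        constructor
        · exact h2 x
        · intro hfx
          by_contra hx
          exact hfx (h1 x hx)
      refine ⟨(f.subtypePerm (fun x => (hp1 x).symm), f.subtypePerm (fun x => (hp2 x).symm)), ?_⟩
      apply Subtype.ext
      show Φ (f.subtypePerm (fun x => (hp1 x).symm), f.subtypePerm (fun x => (hp2 x).symm)) = f
      ext x
      rw [hΦapp]
      by_cases hx : x ∈ A
      · rw [Equiv.Perm.ofSubtype_apply_of_not_mem (p := (· ∈ Aᶜ)) (f.subtypePerm (fun x => (hp2 x).symm))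
          (show ¬x ∈ Aᶜ from fun hc => hc hx)]
        by_cases hx' : x ∈ A \ {a}
        · rw [Equiv.Perm.ofSubtype_apply_of_mem (p := (· ∈ A \ {a})) (f.subtypePerm (fun x => (hp1 x).symm)) hx']
          rfl
        · rw [Equiv.Perm.ofSubtype_apply_of_not_mem (p := (· ∈ A \ {a})) (f.subtypePerm (fun x => (hp1 x).symm)) hx']
          have hxa : x = a := by
            by_contra hc
            exact hx' ⟨hx, hc⟩
          rw [hxa, hfa]
      · rw [Equiv.Perm.ofSubtype_apply_of_mem (p := (· ∈ Aᶜ)) (f.subtypePerm (fun x => (hp2 x).symm)) hx]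
        have hh : ((f.subtypePerm (fun x => (hp2 x).symm) ⟨x, hx⟩ : ↥Aᶜ) : D) ∉ A := (f.subtypePerm (fun x => (hp2 x).symm) ⟨x, hx⟩).2
        rw [Equiv.Perm.ofSubtype_apply_of_not_mem (p := (· ∈ A \ {a})) (f.subtypePerm (fun x => (hp1 x).symm))
          (fun hc => hh hc.1)]
        rfl
    exact ⟨(MulEquiv.ofBijective Φ' ⟨hinj, hsurj⟩).symm⟩
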